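/- Let a>0, α,β∈ℝ, λ∈ℂ, and let φ:[-a,a]→ℂ be twice continuously differentiable with −φ″(x)+2iαφ′(x)+α²φ(x)=λφ(x) for all x∈[-a,a], φ′(a)+βφ(a)=0 and φ′(−a)−βφ(−a)=0. Then α·(|φ(a)|²−|φ(−a)|²) = Im(λ)·∫_{−a}^{a}|φ(x)|² dx. -/

import Mathlib

/-- the identity `α(|φ(a)|² - |φ(-a)|²) = Im λ · ∫|φ|²`
for solutions of the gauged problem with Robin boundary conditions. -/
theorem pt_boundary_current_identity
    (a α β : ℝ) (ha : 0 < a) (lam : ℂ)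
    (φ φ' φ'' : ℝ → ℂ)
    (hd1 : ∀ x ∈ Set.Icc (-a) a, HasDerivAt φ (φ' x) x)
    (hd2 : ∀ x ∈ Set.Icc (-a) a, HasDerivAt φ' (φ'' x) x)
    (hcont : ContinuousOn φ'' (Set.Icc (-a) a))
    (hode : ∀ x ∈ Set.Icc (-a) a,
      -φ'' x + 2 * Complex.I * (α : ℂ) * φ' x + (α : ℂ) ^ 2 * φ x = lam * φ x)
    (hbc1 : φ' a + (β : ℂ) * φ a = 0)
    (hbc2 : φ' (-a) - (β : ℂ) * φ (-a) = 0) :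
    α * (‖φ a‖ ^ 2 - ‖φ (-a)‖ ^ 2) = lam.im * ∫ x in (-a)..a, ‖φ x‖ ^ 2 := by
  have hab : -a ≤ a := by linarith
  set f : ℝ → ℝ := fun x => α * Complex.normSq (φ x)
      - ((starRingEnd ℂ) (φ x) * φ' x).im with hfdef
  have key : ∀ x ∈ Set.uIcc (-a) a,
      HasDerivAt f (lam.im * Complex.normSq (φ x)) x := by
    intro x hx
    rw [Set.uIcc_of_le hab] at hx
    have h1 := hd1 x hx
    have h2 := hd2 x hx
    have hg : HasDerivAt (fun y => (starRingEnd ℂ) (φ y) * φ' y)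
        ((starRingEnd ℂ) (φ' x) * φ' x + (starRingEnd ℂ) (φ x) * φ'' x) x :=
      h1.star.mul h2
    have hsq : HasDerivAt (fun y => (starRingEnd ℂ) (φ y) * φ y)
        ((starRingEnd ℂ) (φ' x) * φ x + (starRingEnd ℂ) (φ x) * φ' x) x :=
      h1.star.mul h1
    have him : HasDerivAt (fun y => ((starRingEnd ℂ) (φ y) * φ' y).im)
        ((starRingEnd ℂ) (φ' x) * φ' x + (starRingEnd ℂ) (φ x) * φ'' x).im x :=
      Complex.imCLM.hasFDerivAt.comp_hasDerivAt x hg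
    have hre : HasDerivAt (fun y => Complex.normSq (φ y))
        ((starRingEnd ℂ) (φ' x) * φ x + (starRingEnd ℂ) (φ x) * φ' x).re x := by
      have := Complex.reCLM.hasFDerivAt.comp_hasDerivAt x hsq
      have heq : (fun y => Complex.normSq (φ y)) = ⇑Complex.reCLM ∘ fun y => (starRingEnd ℂ) (φ y) * φ y := by
        ext y
        simp [Complex.normSq_apply, Complex.mul_re, Complex.mul_im, mul_comm]
      rw [heq]; exact this
    have hf : HasDerivAt f
        (α * ((starRingEnd ℂ) (φ' x) * φ x + (starRingEnd ℂ) (φ x) * φ' x).re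
          - ((starRingEnd ℂ) (φ' x) * φ' x + (starRingEnd ℂ) (φ x) * φ'' x).im) x :=
      (hre.const_mul α).sub him
    convert hf using 1
    have hφ'' : φ'' x = 2 * Complex.I * (α : ℂ) * φ' x + (α : ℂ) ^ 2 * φ x - lam * φ x := by
      have := hode x hx; linear_combination -this
    rw [hφ'']
    simp [Complex.normSq_apply, Complex.mul_re, Complex.mul_im, Complex.ext_iff, ← Complex.ofReal_pow]
    ring
  have hcφ : ContinuousOn φ (Set.Icc (-a) a) := fun x hx => (hd1 x hx).continuousAt.continuousWithinAt
  have hint : IntervalIntegrable (fun x => lam.im * Complex.normSq (φ x)) MeasureTheory.volume (-a) a := by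
    apply ContinuousOn.intervalIntegrable
    rw [Set.uIcc_of_le hab]
    exact (continuousOn_const.mul (Complex.continuous_normSq.comp_continuousOn hcφ))
  have hcalc := intervalIntegral.integral_eq_sub_of_hasDerivAt key hint
  rw [intervalIntegral.integral_const_mul] at hcalc
  have hIa : ((starRingEnd ℂ) (φ a) * φ' a).im = 0 := by
    have h1 : φ' a = -(β : ℂ) * φ a := by linear_combination hbc1
    rw [h1]
    simp [Complex.mul_im, Complex.mul_re]
    ring_nf
  have hIb : ((starRingEnd ℂ) (φ (-a)) * φ' (-a)).im = 0 := by
    have h1 : φ' (-a) = (β : ℂ) * φ (-a) := by linear_combination hbc2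
    rw [h1]
    simp [Complex.mul_im, Complex.mul_re]
    ring_nf
  have hns : ∀ z : ℂ, Complex.normSq z = ‖z‖ ^ 2 := fun z => (Complex.sq_norm z).symm
  simp only [hfdef, hIa, hIb, sub_zero] at hcalc
  calc α * (‖φ a‖ ^ 2 - ‖φ (-a)‖ ^ 2)
      = α * Complex.normSq (φ a) - α * Complex.normSq (φ (-a)) := by rw [hns, hns]; ring
    _ = lam.im * ∫ x in (-a)..a, Complex.normSq (φ x) := hcalc.symm
    _ = lam.im * ∫ x in (-a)..a, ‖φ x‖ ^ 2 := by simp [hns]
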